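/- Let V be a finite-dimensional real vector space with symmetric positive definite bilinear forms a. Suppose V = V₁ + ... + V_N is a decomposition into subspaces such that every v ∈ V admits a decomposition v = Σᵢ vᵢ with vᵢ ∈ Vᵢ and Σᵢ a(vᵢ, vᵢ) ≤ C₀·a(v, v) for some constant C₀ > 0. Let Pᵢ be the a-orthogonal projection onto Vᵢ and P = Σᵢ Pᵢ. Then a(P v, v) ≥ C₀⁻¹·a(v, v) for all v ∈ V. -/
import Mathlib


open Finset

lemma bilin_cs {V : Type*} [AddCommGroup V] [Module ℝ V]
    (a : V →ₗ[ℝ] V →ₗ[ℝ] ℝ)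
    (ha_symm : ∀ v w : V, a v w = a w v)
    (ha_nonneg : ∀ v : V, 0 ≤ a v v) (x y : V) :
    (a x y) ^ 2 ≤ a x x * a y y := by
  have h : ∀ t : ℝ, 0 ≤ a x x * t ^ 2 + (2 * a x y) * t + a y y := by
    intro t
    have := ha_nonneg (t • x + y)
    simp only [map_add, map_smul, LinearMap.add_apply, LinearMap.smul_apply,
      smul_eq_mul] at this
    have hxy : a y x = a x y := ha_symm y x
    rw [hxy] at this
    ring_nf at this ⊢
    linarith
  have h' : ∀ t : ℝ, 0 ≤ a x x * (t * t) + (2 * a x y) * t + a y y := by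
    intro t; have := h t; nlinarith
  have hd := discrim_le_zero h'
  rw [discrim] at hd
  nlinarith

/-- Lions' lemma: the stable decomposition yields the lower spectral bound for the
additive Schwarz operator. -/
theorem stmt6 {V : Type*} [AddCommGroup V] [Module ℝ V] [FiniteDimensional ℝ V]
    (a : V →ₗ[ℝ] V →ₗ[ℝ] ℝ)
    (ha_symm : ∀ v w : V, a v w = a w v)
    (ha_pos : ∀ v : V, v ≠ 0 → 0 < a v v)
    (N : ℕ)
    (Vi : Fin N → Submodule ℝ V)
    (hspan : (⨆ i, Vi i) = ⊤)
    (C₀ : ℝ) (hC₀ : 0 < C₀)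
    (hstable : ∀ v : V, ∃ vs : Fin N → V,
      (∀ i, vs i ∈ Vi i) ∧ v = ∑ i, vs i ∧ ∑ i, a (vs i) (vs i) ≤ C₀ * a v v)
    (P : Fin N → V →ₗ[ℝ] V)
    (hPmem : ∀ i, ∀ v : V, P i v ∈ Vi i)
    (hPdef : ∀ i, ∀ v : V, ∀ w ∈ Vi i, a (P i v) w = a v w) :
    ∀ v : V, C₀⁻¹ * a v v ≤ a ((∑ i, P i) v) v := by
  intro v
  have ha_nonneg : ∀ w : V, 0 ≤ a w w := by
    intro w
    by_cases hw : w = 0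
    · simp [hw]
    · exact (ha_pos w hw).le
  by_cases hv : v = 0
  · simp [hv]
  obtain ⟨vs, hmem, hsum, hC⟩ := hstable v
  -- S = a (P v) v
  have hPv : a ((∑ i, P i) v) v = ∑ i, a (P i v) (P i v) := by
    rw [LinearMap.sum_apply, map_sum]
    simp only [LinearMap.sum_apply]
    refine Finset.sum_congr rfl fun i _ => ?_
    rw [hPdef i v (P i v) (hPmem i v), ha_symm]
  have hS : 0 ≤ a ((∑ i, P i) v) v := by
    rw [hPv]; exact Finset.sum_nonneg fun i _ => ha_nonneg _
  -- key: a v v = ∑ a (P i v) (vs i)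
  have hkey : a v v = ∑ i, a (P i v) (vs i) := by
    calc a v v = ∑ i, a v (vs i) := by nth_rewrite 2 [hsum]; rw [map_sum]
    _ = ∑ i, a (P i v) (vs i) :=
      Finset.sum_congr rfl fun i _ => (hPdef i v (vs i) (hmem i)).symm
  -- Cauchy-Schwarz
  have hcs : a v v ≤ Real.sqrt (∑ i, a (P i v) (P i v)) * Real.sqrt (∑ i, a (vs i) (vs i)) := by
    rw [hkey]
    calc ∑ i, a (P i v) (vs i)
        ≤ ∑ i, Real.sqrt (a (P i v) (P i v)) * Real.sqrt (a (vs i) (vs i)) := by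
          refine Finset.sum_le_sum fun i _ => ?_
          have h1 := bilin_cs a ha_symm ha_nonneg (P i v) (vs i)
          have h2 : a (P i v) (vs i) ≤ |a (P i v) (vs i)| := le_abs_self _
          refine h2.trans ?_
          rw [← Real.sqrt_mul_self (abs_nonneg _), ← Real.sqrt_mul (ha_nonneg _)]
          exact Real.sqrt_le_sqrt (by nlinarith [abs_nonneg (a (P i v) (vs i)), sq_abs (a (P i v) (vs i))])
      _ ≤ Real.sqrt (∑ i, a (P i v) (P i v)) * Real.sqrt (∑ i, a (vs i) (vs i)) :=
          Real.sum_sqrt_mul_sqrt_le _ (fun i => ha_nonneg _) (fun i => ha_nonneg _)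
  have hsq : (a v v) ^ 2 ≤ (∑ i, a (P i v) (P i v)) * (∑ i, a (vs i) (vs i)) := by
    have h1 : 0 ≤ ∑ i, a (P i v) (P i v) := Finset.sum_nonneg fun i _ => ha_nonneg _
    have h2 : 0 ≤ ∑ i, a (vs i) (vs i) := Finset.sum_nonneg fun i _ => ha_nonneg _
    calc (a v v) ^ 2 ≤ (Real.sqrt (∑ i, a (P i v) (P i v)) * Real.sqrt (∑ i, a (vs i) (vs i))) ^ 2 := by
          apply sq_le_sq' _ hcs
          have := ha_nonneg v
          nlinarith [Real.sqrt_nonneg (∑ i, a (P i v) (P i v)), Real.sqrt_nonneg (∑ i, a (vs i) (vs i))]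
      _ = (∑ i, a (P i v) (P i v)) * (∑ i, a (vs i) (vs i)) := by
          rw [mul_pow, Real.sq_sqrt h1, Real.sq_sqrt h2]
  have havv : 0 < a v v := ha_pos v hv
  rw [hPv]
  rw [inv_mul_le_iff₀ hC₀]
  have h2 : 0 ≤ ∑ i, a (vs i) (vs i) := Finset.sum_nonneg fun i _ => ha_nonneg _
  nlinarith [hsq, hC, havv]
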